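/- Suppose the single-slot price-setting mechanism is run on the truthful input (each bidder declaring her true max-cpc m_i and budget B_i), resulting in price p and click allocation c_1, …, c_n. Then for every ε > 0 there exists a profile of declarations (with budgets declared truthfully) that is a pure-strategy ε-Nash equilibrium of the greedy first-price mechanism and in which each bidder i receives between c_i − ε and c_i + ε clicks. -/

import Mathlib

/-!
Single slot with `D > 0` clicks, `n > 1` bidders.  We define both the
price-setting (PS) mechanism and the greedy first-price (GFP) mechanism.
Bidders are ordered by declared bid, decreasing, ties broken by the fixed
(index) order.
-/

/-- 0-based rank of bidder `i` when sorting by `key`, decreasing, ties broken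
by the fixed lexicographic (index) order. -/
noncomputable def rankBy (n : ℕ) (key : Fin n → ℝ) (i : Fin n) : ℕ :=
  (Finset.univ.filter (fun j => key i < key j ∨ (key j = key i ∧ j < i))).card

/-- The key value at 0-based rank `t` (the `(t+1)`-st highest), or `0` if
there is no such bidder. -/
noncomputable def nthKey (n : ℕ) (key : Fin n → ℝ) (t : ℕ) : ℝ :=
  if h : (Finset.univ.filter (fun i => t ≤ rankBy n key i)).Nonempty
  then (Finset.univ.filter (fun i => t ≤ rankBy n key i)).sup' h key
  else 0

/-- Value of `f` at the bidder whose 0-based rank (by `key`) is `t`, or `0` if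
there is no such bidder. -/
noncomputable def atRank (n : ℕ) (key f : Fin n → ℝ) (t : ℕ) : ℝ :=
  if h : (Finset.univ.filter (fun i => rankBy n key i = t)).Nonempty
  then f ((Finset.univ.filter (fun i => rankBy n key i = t)).min' h)
  else 0

/-- Total declared budget of the `t` highest-ranked bidders (by bid). -/
noncomputable def prefBudget (n : ℕ) (bid bud : Fin n → ℝ) (t : ℕ) : ℝ :=
  ∑ i ∈ Finset.univ.filter (fun i => rankBy n bid i < t), bud i

open Classical in
/-- The index `k` of the PS mechanism: the least `t ≥ 1` such that the
`(t+1)`-st highest bid is at most `(Σ_{i=1}^t B̂_i)/D` (with `t = n` as a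
defensive fallback; for positive budgets the condition always holds at `n`). -/
noncomputable def psK (n : ℕ) (D : ℝ) (bid bud : Fin n → ℝ) : ℕ :=
  Nat.find (p := fun t =>
      (1 ≤ t ∧ nthKey n bid t ≤ prefBudget n bid bud t / D) ∨ t = n)
    ⟨n, Or.inr rfl⟩

/-- The PS price: `p = min((Σ_{i=1}^k B̂_i)/D, b_{(k)})`. -/
noncomputable def psPrice (n : ℕ) (D : ℝ) (bid bud : Fin n → ℝ) : ℝ :=
  min (prefBudget n bid bud (psK n D bid bud) / D)
    (nthKey n bid (psK n D bid bud - 1))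

/-- Clicks allocated to bidder `i` by the PS mechanism. -/
noncomputable def psClicks (n : ℕ) (D : ℝ) (bid bud : Fin n → ℝ) (i : Fin n) : ℝ :=
  if psPrice n D bid bud ≤ 0 then 0
  else if rankBy n bid i + 1 < psK n D bid bud then bud i / psPrice n D bid bud
  else if rankBy n bid i + 1 = psK n D bid bud then
    (psPrice n D bid bud * D - prefBudget n bid bud (psK n D bid bud - 1)) /
      psPrice n D bid bud
  else 0

/-- Total clicks allocated by the greedy first-price mechanism to the bidders
of rank `< t`. -/
noncomputable def gfpBefore (n : ℕ) (D : ℝ) (bid bud : Fin n → ℝ) : ℕ → ℝ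
  | 0 => 0
  | t + 1 => gfpBefore n D bid bud t +
      min (atRank n bid bud t / atRank n bid bid t)
        (D - gfpBefore n D bid bud t)

/-- Clicks allocated to bidder `i` by the greedy first-price mechanism:
processing bidders in decreasing order of bid, `c_i = min{B̂_i/b_i, D − Σ_{i'
before i} c_{i'}}`, at per-click price `b_i`. -/
noncomputable def gfpClicks (n : ℕ) (D : ℝ) (bid bud : Fin n → ℝ) (i : Fin n) : ℝ :=
  min (bud i / bid i) (D - gfpBefore n D bid bud (rankBy n bid i))

/-- Click-maximizing GFP utility of bidder `i` with true max-cpc `m` and true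
budget `B`: clicks received if the per-click price `bid i` is at most `m` and
the total payment is within `B` (and `0` if unallocated), `−∞` otherwise. -/
noncomputable def gfpUtil (n : ℕ) (D : ℝ) (m B : ℝ) (bid bud : Fin n → ℝ)
    (i : Fin n) : EReal :=
  if gfpClicks n D bid bud i = 0 ∨
      (bid i ≤ m ∧ gfpClicks n D bid bud i * bid i ≤ B)
  then (gfpClicks n D bid bud i : EReal) else ⊥

namespace GfpAux
open Finset

variable {n : ℕ}

def ord (key : Fin n → ℝ) (j i : Fin n) : Prop :=
  key i < key j ∨ (key j = key i ∧ j < i)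

open Classical in
lemma rank_eq (key : Fin n → ℝ) (i : Fin n) :
    rankBy n key i = (Finset.univ.filter (fun j => ord key j i)).card := by
  unfold rankBy ord
  congr!

lemma ord_irrefl (key : Fin n → ℝ) (i : Fin n) : ¬ ord key i i := by
  simp [ord]

lemma ord_asymm {key : Fin n → ℝ} {i j : Fin n} (h : ord key j i) : ¬ ord key i j := by
  rcases h with h | ⟨h1, h2⟩ <;> rintro (h' | ⟨h1', h2'⟩)
  · exact absurd h' (not_lt.2 h.le)
  · exact absurd h (by rw [h1']; exact lt_irrefl _)
  · exact absurd h' (by rw [h1]; exact lt_irrefl _)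
  · exact absurd h2' (not_lt.2 h2.le)

lemma ord_total {key : Fin n → ℝ} {i j : Fin n} (h : i ≠ j) :
    ord key j i ∨ ord key i j := by
  rcases lt_trichotomy (key i) (key j) with h' | h' | h'
  · exact Or.inl (Or.inl h')
  · rcases lt_or_gt_of_ne h with hv | hv
    · exact Or.inr (Or.inr ⟨h', hv⟩)
    · exact Or.inl (Or.inr ⟨h'.symm, hv⟩)
  · exact Or.inr (Or.inl h')

lemma ord_trans {key : Fin n → ℝ} {i j l : Fin n} (h1 : ord key i j) (h2 : ord key j l) :
    ord key i l := by
  rcases h1 with h1 | ⟨h1a, h1b⟩ <;> rcases h2 with h2 | ⟨h2a, h2b⟩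
  · exact Or.inl (h2.trans h1)
  · exact Or.inl (h2a ▸ h1)
  · exact Or.inl (by rw [h1a]; exact h2)
  · exact Or.inr ⟨h1a.trans h2a, h1b.trans h2b⟩

lemma rank_lt_of_ord {key : Fin n → ℝ} {i j : Fin n} (h : ord key j i) :
    rankBy n key j < rankBy n key i := by
  classical
  rw [rank_eq, rank_eq]
  apply Finset.card_lt_card
  constructor
  · intro l hl
    simp only [mem_filter, mem_univ, true_and] at hl ⊢
    exact ord_trans hl h
  · intro hsub
    have hj : j ∈ Finset.univ.filter (fun l => ord key l i) := by
      simp only [mem_filter, mem_univ, true_and]; exact h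
    have := hsub hj
    simp only [mem_filter, mem_univ, true_and] at this
    exact ord_irrefl key j this

lemma ord_iff_rank_lt {key : Fin n → ℝ} {i j : Fin n} :
    ord key j i ↔ rankBy n key j < rankBy n key i := by
  constructor
  · exact rank_lt_of_ord
  · intro h
    by_contra hc
    rcases eq_or_ne j i with rfl | hne
    · omega
    · rcases ord_total (key := key) hne.symm with h' | h'
      · exact hc h'
      · exact absurd h (not_lt.2 (rank_lt_of_ord h').le)

lemma rank_lt_n' (hn : 0 < n) (key : Fin n → ℝ) (i : Fin n) : rankBy n key i < n := by
  classical
  rw [rank_eq]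
  have hsub : Finset.univ.filter (fun j => ord key j i) ⊆ Finset.univ.erase i := by
    intro j hj
    simp only [mem_filter, mem_univ, true_and] at hj
    exact Finset.mem_erase.2 ⟨fun h => ord_irrefl key i (h ▸ hj), Finset.mem_univ _⟩
  have h2 := Finset.card_le_card hsub
  rw [Finset.card_erase_of_mem (Finset.mem_univ i)] at h2
  simp only [Finset.card_univ, Fintype.card_fin] at h2
  omega

lemma rank_injective (key : Fin n → ℝ) : Function.Injective (rankBy n key) := by
  intro i j h
  by_contra hne
  rcases ord_total (key := key) hne with h' | h'
  · have := rank_lt_of_ord h'; omega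
  · have := rank_lt_of_ord h'; omega

lemma rank_surj (key : Fin n → ℝ) {t : ℕ} (ht : t < n) : ∃ i, rankBy n key i = t := by
  have hn : 0 < n := by omega
  have : NeZero n := ⟨by omega⟩
  have hbij : Function.Bijective (fun i => (⟨rankBy n key i, rank_lt_n' hn key i⟩ : Fin n)) := by
    apply Finite.injective_iff_bijective.1
    intro i j h
    exact rank_injective key (by simpa [Fin.ext_iff] using h)
  obtain ⟨i, hi⟩ := hbij.2 ⟨t, ht⟩
  exact ⟨i, by simpa [Fin.ext_iff] using hi⟩

lemma key_antitone {key : Fin n → ℝ} {i j : Fin n} (h : rankBy n key i ≤ rankBy n key j) :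
    key j ≤ key i := by
  by_contra hc
  have : ord key j i := Or.inl (not_le.1 hc)
  have := rank_lt_of_ord this
  omega

lemma nthKey_eq_of_rank {key : Fin n → ℝ} {i : Fin n} {t : ℕ} (h : rankBy n key i = t) :
    nthKey n key t = key i := by
  classical
  have hmem : i ∈ Finset.univ.filter (fun j => t ≤ rankBy n key j) := by
    simp [h]
  rw [nthKey, dif_pos ⟨i, hmem⟩]
  apply le_antisymm
  · apply Finset.sup'_le
    intro j hj
    simp only [mem_filter, mem_univ, true_and] at hj
    exact key_antitone (h ▸ hj)
  · exact Finset.le_sup' key hmem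

lemma nthKey_of_ge {key : Fin n → ℝ} {t : ℕ} (hn : 0 < n) (h : n ≤ t) :
    nthKey n key t = 0 := by
  rw [nthKey, dif_neg]
  rintro ⟨i, hi⟩
  simp only [mem_filter, mem_univ, true_and] at hi
  have := rank_lt_n' hn key i
  omega

lemma atRank_eq_of_rank {key f : Fin n → ℝ} {i : Fin n} {t : ℕ} (h : rankBy n key i = t) :
    atRank n key f t = f i := by
  classical
  have hmem : i ∈ Finset.univ.filter (fun j => rankBy n key j = t) := by simp [h]
  rw [atRank, dif_pos ⟨i, hmem⟩]
  have hmm := Finset.min'_mem (Finset.univ.filter (fun j => rankBy n key j = t)) ⟨i, hmem⟩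
  simp only [mem_filter, mem_univ, true_and] at hmm
  rw [rank_injective key (hmm.trans h.symm)]

lemma atRank_of_not_exists {key f : Fin n → ℝ} {t : ℕ} (h : ¬ ∃ i, rankBy n key i = t) :
    atRank n key f t = 0 := by
  rw [atRank, dif_neg]
  rintro ⟨i, hi⟩
  simp only [mem_filter, mem_univ, true_and] at hi
  exact h ⟨i, hi⟩

lemma prefBudget_succ_of_rank {bid bud : Fin n → ℝ} {i : Fin n} {t : ℕ}
    (h : rankBy n bid i = t) :
    prefBudget n bid bud (t + 1) = prefBudget n bid bud t + bud i := by
  classical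
  unfold prefBudget
  have hset : Finset.univ.filter (fun j => rankBy n bid j < t + 1)
      = insert i (Finset.univ.filter (fun j => rankBy n bid j < t)) := by
    ext j
    simp only [mem_filter, mem_univ, true_and, mem_insert]
    constructor
    · intro hj
      rcases Nat.lt_succ_iff_lt_or_eq.1 hj with h' | h'
      · exact Or.inr h'
      · exact Or.inl (rank_injective bid (h'.trans h.symm))
    · rintro (rfl | hj)
      · omega
      · omega
  rw [hset, Finset.sum_insert (by simp [h]), add_comm]

lemma prefBudget_succ_of_not {bid bud : Fin n → ℝ} {t : ℕ}
    (h : ¬ ∃ i, rankBy n bid i = t) :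
    prefBudget n bid bud (t + 1) = prefBudget n bid bud t := by
  classical
  unfold prefBudget
  congr 1
  ext j
  simp only [mem_filter, mem_univ, true_and]
  constructor
  · intro hj
    rcases Nat.lt_succ_iff_lt_or_eq.1 hj with h' | h'
    · exact h'
    · exact absurd ⟨j, h'⟩ h
  · omega

lemma prefBudget_mono {bid bud : Fin n → ℝ} (hbud : ∀ j, 0 ≤ bud j) {s t : ℕ}
    (h : s ≤ t) : prefBudget n bid bud s ≤ prefBudget n bid bud t := by
  classical
  apply Finset.sum_le_sum_of_subset_of_nonneg
  · intro j hj; simp only [mem_filter, mem_univ, true_and] at hj ⊢; omega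
  · intro j _ _; exact hbud j

lemma gfpBefore_eq (D : ℝ) (hD : 0 ≤ D) (bid bud : Fin n → ℝ)
    (hbud : ∀ j, 0 ≤ bud j) (hbid : ∀ j, 0 ≤ bid j) (t : ℕ) :
    gfpBefore n D bid bud t =
      min D (∑ j ∈ Finset.univ.filter (fun j => rankBy n bid j < t), bud j / bid j) := by
  classical
  induction t with
  | zero =>
    simp only [gfpBefore]
    simp only [Nat.not_lt_zero, Finset.filter_false]
    simp [min_eq_right hD]
  | succ t ih =>
    have hterm : ∀ s : ℕ, 0 ≤ atRank n bid bud s / atRank n bid bid s := by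
      intro s
      by_cases h : ∃ i, rankBy n bid i = s
      · obtain ⟨i, hi⟩ := h
        rw [atRank_eq_of_rank hi, atRank_eq_of_rank hi]
        exact div_nonneg (hbud i) (hbid i)
      · rw [atRank_of_not_exists h]
        simp
    have hsum : ∑ j ∈ Finset.univ.filter (fun j => rankBy n bid j < t + 1), bud j / bid j
        = (∑ j ∈ Finset.univ.filter (fun j => rankBy n bid j < t), bud j / bid j)
          + atRank n bid bud t / atRank n bid bid t := by
      by_cases h : ∃ i, rankBy n bid i = t
      · obtain ⟨i, hi⟩ := h
        rw [atRank_eq_of_rank hi, atRank_eq_of_rank hi]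
        have := prefBudget_succ_of_rank (bud := fun j => bud j / bid j) hi
        unfold prefBudget at this
        exact this
      · rw [atRank_of_not_exists h, atRank_of_not_exists h]
        have := prefBudget_succ_of_not (bud := fun j => bud j / bid j) (t := t) h
        unfold prefBudget at this
        rw [div_zero, add_zero]; exact this
    rw [gfpBefore, ih, hsum]
    rcases le_or_gt (∑ j ∈ Finset.univ.filter (fun j => rankBy n bid j < t), bud j / bid j) D
      with hle | hlt
    · rw [min_eq_right hle]
      rcases le_or_gt ((∑ j ∈ Finset.univ.filter (fun j => rankBy n bid j < t), bud j / bid j)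
          + atRank n bid bud t / atRank n bid bid t) D with h2 | h2
      · rw [min_eq_right h2, min_eq_left (by linarith [hterm t])]
      · rw [min_eq_left h2.le, min_eq_right (by linarith)]
        ring
    · have h0 : min (atRank n bid bud t / atRank n bid bid t) (D - D) = 0 := by
        rw [sub_self]; exact min_eq_right (hterm t)
      rw [min_eq_left hlt.le, h0, min_eq_left (by linarith [hterm t])]
      ring

lemma gfpClicks_eq (D : ℝ) (hD : 0 ≤ D) (bid bud : Fin n → ℝ)
    (hbud : ∀ j, 0 ≤ bud j) (hbid : ∀ j, 0 ≤ bid j) (i : Fin n) :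
    gfpClicks n D bid bud i = min (bud i / bid i)
      (D - min D (∑ j ∈ Finset.univ.filter
          (fun j => rankBy n bid j < rankBy n bid i), bud j / bid j)) := by
  rw [gfpClicks, gfpBefore_eq D hD bid bud hbud hbid]

lemma gfpClicks_nonneg (D : ℝ) (hD : 0 ≤ D) (bid bud : Fin n → ℝ)
    (hbud : ∀ j, 0 ≤ bud j) (hbid : ∀ j, 0 ≤ bid j) (i : Fin n) :
    0 ≤ gfpClicks n D bid bud i := by
  rw [gfpClicks_eq D hD bid bud hbud hbid]
  refine le_min (div_nonneg (hbud i) (hbid i)) ?_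
  have := min_le_left D (∑ j ∈ Finset.univ.filter
      (fun j => rankBy n bid j < rankBy n bid i), bud j / bid j)
  linarith

lemma gfpClicks_le_bud (D : ℝ) (bid bud : Fin n → ℝ) (i : Fin n) :
    gfpClicks n D bid bud i ≤ bud i / bid i := min_le_left _ _

lemma gfpClicks_le_sub (D : ℝ) (hD : 0 ≤ D) (bid bud : Fin n → ℝ)
    (hbud : ∀ j, 0 ≤ bud j) (hbid : ∀ j, 0 ≤ bid j) (i : Fin n)
    (T : Finset (Fin n)) (hT : ∀ j ∈ T, ord bid j i) :
    gfpClicks n D bid bud i ≤ D - min D (∑ j ∈ T, bud j / bid j) := by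
  classical
  rw [gfpClicks_eq D hD bid bud hbud hbid]
  refine (min_le_right _ _).trans ?_
  have hsub : T ⊆ Finset.univ.filter (fun j => rankBy n bid j < rankBy n bid i) := by
    intro j hj
    simp only [mem_filter, mem_univ, true_and]
    exact rank_lt_of_ord (hT j hj)
  have hsums : (∑ j ∈ T, bud j / bid j) ≤ ∑ j ∈ Finset.univ.filter
      (fun j => rankBy n bid j < rankBy n bid i), bud j / bid j :=
    Finset.sum_le_sum_of_subset_of_nonneg hsub (fun j _ _ => div_nonneg (hbud j) (hbid j))
  have := min_le_min (le_refl D) hsums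
  linarith

end GfpAux

open GfpAux in
open Classical in
set_option maxHeartbeats 1000000 in
/-- Running the PS mechanism on the truthful input yields clicks
`psClicks n D m B`.  For every `ε > 0` there is a profile of declared bids
(with budgets declared truthfully) that is a pure-strategy ε-Nash equilibrium
of the GFP mechanism and in which every bidder receives within `ε` of her PS
click allocation. -/
theorem gfp_epsilon_nash_matches_ps (n : ℕ) (hn : 1 < n) (D : ℝ) (hD : 0 < D)
    (m B : Fin n → ℝ) (hm : ∀ j, 0 < m j) (hB : ∀ j, 0 < B j)
    (ε : ℝ) (hε : 0 < ε) :
    ∃ bd : Fin n → ℝ, (∀ j, 0 ≤ bd j) ∧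
      (∀ (i : Fin n) (b' B' : ℝ), 0 ≤ b' → 0 < B' →
        gfpUtil n D (m i) (B i)
            (Function.update bd i b') (Function.update B i B') i ≤
          gfpUtil n D (m i) (B i) bd B i + (ε : EReal)) ∧
      (∀ i : Fin n, |gfpClicks n D bd B i - psClicks n D m B i| ≤ ε) := by
  classical
  have hn0 : 0 < n := by omega
  have hB0 : ∀ j, 0 ≤ B j := fun j => (hB j).le
  obtain ⟨k, hkdef⟩ : ∃ k, k = psK n D m B := ⟨_, rfl⟩
  obtain ⟨p, hpdef⟩ : ∃ p, p = psPrice n D m B := ⟨_, rfl⟩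
  -- psK facts
  have hkspec : (1 ≤ k ∧ nthKey n m k ≤ prefBudget n m B k / D) ∨ k = n := by
    rw [hkdef]; unfold psK
    exact Nat.find_spec (p := fun t => (1 ≤ t ∧ nthKey n m t ≤ prefBudget n m B t / D) ∨ t = n) ⟨n, Or.inr rfl⟩
  have hkle : k ≤ n := by
    rw [hkdef]; unfold psK
    exact Nat.find_le (Or.inr rfl)
  have hkmin : ∀ t, t < k → ¬((1 ≤ t ∧ nthKey n m t ≤ prefBudget n m B t / D) ∨ t = n) := by
    intro t ht
    rw [hkdef] at ht; unfold psK at ht; exact Nat.find_min _ ht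
  have hk1 : 1 ≤ k := by
    by_contra h
    have h0 : k = 0 := by omega
    rcases hkspec with ⟨h1, _⟩ | h1 <;> omega
  obtain ⟨i₀, hi₀⟩ := rank_surj m (show k - 1 < n by omega)
  have hnth1 : nthKey n m (k - 1) = m i₀ := nthKey_eq_of_rank hi₀
  have hpeq : p = min (prefBudget n m B k / D) (m i₀) := by
    rw [hpdef]; unfold psPrice; rw [← hkdef, hnth1]
  have hSB_nonneg : ∀ t, 0 ≤ prefBudget n m B t :=
    fun t => Finset.sum_nonneg (fun j _ => hB0 j)
  have hBi0_le_SBk : B i₀ ≤ prefBudget n m B k := by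
    unfold prefBudget
    apply Finset.single_le_sum (fun l _ => hB0 l)
    simp only [Finset.mem_filter, Finset.mem_univ, true_and]
    omega
  have hp_pos : 0 < p := by
    rw [hpeq]
    exact lt_min (div_pos (lt_of_lt_of_le (hB i₀) hBi0_le_SBk) hD) (hm i₀)
  have hk2 : nthKey n m k ≤ prefBudget n m B k / D := by
    rcases hkspec with ⟨_, h⟩ | h
    · exact h
    · rw [h, nthKey_of_ge hn0 (le_refl n)]
      exact div_nonneg (hSB_nonneg n) hD.le
  have hpm : ∀ i, rankBy n m i < k → p ≤ m i := by
    intro i hi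
    have h1 : m i₀ ≤ m i := key_antitone (by omega)
    exact le_trans (by rw [hpeq]; exact min_le_right _ _) h1
  have hmp : ∀ i, k ≤ rankBy n m i → m i ≤ p := by
    intro i hi
    have hkn : k < n := lt_of_le_of_lt hi (rank_lt_n' hn0 m i)
    obtain ⟨i₁, hi₁⟩ := rank_surj m hkn
    have h1 : m i ≤ m i₁ := key_antitone (by omega)
    have h2 : nthKey n m k = m i₁ := nthKey_eq_of_rank hi₁
    have h3 : m i ≤ m i₀ := key_antitone (by omega)
    rw [hpeq]
    exact le_min (by rw [h2] at hk2; linarith) h3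
  have hSBmono : ∀ s t : ℕ, s ≤ t → prefBudget n m B s ≤ prefBudget n m B t :=
    fun s t h => prefBudget_mono hB0 h
  have hSBk1 : prefBudget n m B (k - 1) ≤ p * D := by
    rcases Nat.eq_or_lt_of_le hk1 with h1 | h1
    · have h0 : prefBudget n m B (k - 1) = 0 := by
        rw [show k - 1 = 0 from by omega]
        unfold prefBudget
        simp
      rw [h0]; positivity
    · have ht := hkmin (k - 1) (by omega)
      push_neg at ht
      have h2 : prefBudget n m B (k - 1) / D < nthKey n m (k - 1) := ht.1 (by omega)
      rw [hnth1] at h2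
      have h3 : prefBudget n m B (k - 1) ≤ prefBudget n m B k := hSBmono _ _ (by omega)
      rw [hpeq]
      rcases le_total (prefBudget n m B k / D) (m i₀) with hc | hc
      · rw [min_eq_left hc]
        have h4 : prefBudget n m B k / D * D = prefBudget n m B k := div_mul_cancel₀ _ hD.ne'
        linarith
      · rw [min_eq_right hc]
        have h5 := (div_lt_iff₀ hD).1 h2
        linarith
  have hSBk : p * D ≤ prefBudget n m B k := by
    rw [hpeq]
    calc min (prefBudget n m B k / D) (m i₀) * D ≤ (prefBudget n m B k / D) * D :=
          mul_le_mul_of_nonneg_right (min_le_left _ _) hD.le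
      _ = prefBudget n m B k := div_mul_cancel₀ _ hD.ne'
  set Tb := ∑ j, B j with hTbdef
  have hSB_le_Tb : ∀ t, prefBudget n m B t ≤ Tb := fun t =>
    Finset.sum_le_sum_of_subset_of_nonneg (Finset.filter_subset _ _) (fun j _ _ => hB0 j)
  have hB_le_Tb : ∀ j, B j ≤ Tb := fun j =>
    Finset.single_le_sum (fun l _ => hB0 l) (Finset.mem_univ j)
  have hTb_pos : 0 < Tb := lt_of_lt_of_le (hB i₀) (hB_le_Tb i₀)
  have hncast : (0:ℝ) < (n:ℝ) := by exact_mod_cast hn0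
  -- choose δ
  obtain ⟨δ, hδ_pos, hδ1, hδ2⟩ : ∃ δ : ℝ, 0 < δ ∧
      δ * ((n:ℝ) * (Tb + D)) ≤ ε / 2 * p ^ 2 ∧ δ * ((n:ℝ) * D) ≤ ε / 2 * p := by
    have hN : 0 < (n:ℝ) * (Tb + D) := by positivity
    refine ⟨min (ε / 2 * p ^ 2 / ((n:ℝ) * (Tb + D))) (ε / 2 * p / ((n:ℝ) * (Tb + D))),
      lt_min (by positivity) (by positivity), ?_, ?_⟩
    · calc _ ≤ (ε / 2 * p ^ 2 / ((n:ℝ) * (Tb + D))) * ((n:ℝ) * (Tb + D)) :=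
            mul_le_mul_of_nonneg_right (min_le_left _ _) hN.le
        _ = ε / 2 * p ^ 2 := div_mul_cancel₀ _ hN.ne'
    · calc _ ≤ (ε / 2 * p / ((n:ℝ) * (Tb + D))) * ((n:ℝ) * (Tb + D)) := by
            apply mul_le_mul (min_le_right _ _) ?_ (by positivity) (by positivity)
            nlinarith [hTb_pos]
        _ = ε / 2 * p := div_mul_cancel₀ _ hN.ne'
  set q := p + δ * (n:ℝ) with hqdef
  have hpq : p ≤ q := by rw [hqdef]; nlinarith
  have hq_pos : 0 < q := lt_of_lt_of_le hp_pos hpq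
  have hkey1 : ∀ x : ℝ, 0 ≤ x → x ≤ Tb → x / p - x / q ≤ ε / 2 := by
    intro x hx hxT
    rw [div_sub_div _ _ hp_pos.ne' hq_pos.ne', div_le_iff₀ (by positivity)]
    rw [hqdef]
    nlinarith [hδ1, mul_le_mul_of_nonneg_right hxT (mul_nonneg hδ_pos.le hncast.le),
      mul_pos hp_pos hp_pos, hε.le, hD.le, mul_nonneg (mul_nonneg hδ_pos.le hncast.le) hD.le]
  have hkey2 : D - p * D / q ≤ ε / 2 := by
    have heq : D - p * D / q = (D * q - p * D) / q := by field_simp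
    rw [heq, div_le_iff₀ hq_pos, hqdef]
    nlinarith [hδ2, hε.le, hp_pos.le]
  -- the equilibrium bid profile
  set bd : Fin n → ℝ := fun i => min (m i) (p + δ * ((n - rankBy n m i : ℕ) : ℝ)) with hbddef
  have hcast1 : ∀ i : Fin n, (1:ℝ) ≤ ((n - rankBy n m i : ℕ):ℝ) := by
    intro i
    have := rank_lt_n' hn0 m i
    exact_mod_cast Nat.one_le_iff_ne_zero.2 (by omega)
  have hcastn : ∀ i : Fin n, ((n - rankBy n m i : ℕ):ℝ) ≤ (n:ℝ) := by
    intro i; exact_mod_cast Nat.sub_le n _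
  have hX_gt_p : ∀ i, p < p + δ * ((n - rankBy n m i : ℕ):ℝ) := by
    intro i; nlinarith [hδ_pos, hcast1 i]
  have hbd_le_m : ∀ i, bd i ≤ m i := fun i => min_le_left _ _
  have hbd_pos : ∀ i, 0 < bd i := fun i => lt_min (hm i) (lt_trans hp_pos (hX_gt_p i))
  have hbd0 : ∀ i, 0 ≤ bd i := fun i => (hbd_pos i).le
  have hbd_lo : ∀ i, rankBy n m i < k → p ≤ bd i := fun i hi =>
    le_min (hpm i hi) (hX_gt_p i).le
  have hbd_hi : ∀ i, bd i ≤ q := by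
    intro i
    refine (min_le_right _ _).trans ?_
    rw [hqdef]
    nlinarith [hcastn i, hδ_pos]
  have hbd_eq_p : ∀ i, bd i = p → m i = p := by
    intro i hbi
    rcases min_eq_iff.1 hbi with ⟨h1, _⟩ | ⟨h1, _⟩
    · exact h1
    · exact absurd h1 (ne_of_gt (hX_gt_p i))
  -- rank preservation
  have hkey : ∀ j i : Fin n, ord m j i → ord bd j i := by
    intro j i hji
    have hrji : rankBy n m j < rankBy n m i := rank_lt_of_ord hji
    have hXX : p + δ * ((n - rankBy n m i : ℕ):ℝ) < p + δ * ((n - rankBy n m j : ℕ):ℝ) := by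
      have h1 : (n - rankBy n m i : ℕ) < (n - rankBy n m j : ℕ) := by
        have := rank_lt_n' hn0 m i
        omega
      have h2 : ((n - rankBy n m i : ℕ):ℝ) < ((n - rankBy n m j : ℕ):ℝ) := by exact_mod_cast h1
      nlinarith [hδ_pos]
    rcases hji with hlt | ⟨heq, hidx⟩
    · exact Or.inl (lt_min (lt_of_le_of_lt (min_le_left _ _) hlt)
        (lt_of_le_of_lt (min_le_right _ _) hXX))
    · have hle : bd i ≤ bd j := min_le_min heq.ge hXX.le
      rcases eq_or_lt_of_le hle with heq2 | hlt2
      · exact Or.inr ⟨heq2.symm, hidx⟩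
      · exact Or.inl hlt2
  have hord_iff : ∀ j i : Fin n, ord bd j i ↔ ord m j i := by
    intro j i
    constructor
    · intro h
      rcases eq_or_ne j i with rfl | hne
      · exact absurd h (ord_irrefl bd j)
      · rcases ord_total (key := m) hne with h' | h'
        · exact absurd (hkey i j h') (ord_asymm h)
        · exact h'
    · exact hkey j i
  have hrank : ∀ i, rankBy n bd i = rankBy n m i := by
    intro i
    rw [rank_eq, rank_eq]
    congr 1
    ext j
    simp only [Finset.mem_filter, Finset.mem_univ, true_and]
    exact hord_iff j i
  -- consumed clicks of top-t bidders at equilibrium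
  set W : ℕ → ℝ := fun t => ∑ j ∈ Finset.univ.filter (fun j => rankBy n m j < t), B j / bd j
    with hWdef
  have hc0eq : ∀ i, gfpClicks n D bd B i
      = min (B i / bd i) (D - min D (W (rankBy n m i))) := by
    intro i
    rw [gfpClicks_eq D hD.le bd B hB0 hbd0 i]
    simp only [hrank, hWdef]
  have hW_mono : ∀ s t : ℕ, s ≤ t → W s ≤ W t := by
    intro s t hst
    simp only [hWdef]
    apply Finset.sum_le_sum_of_subset_of_nonneg
    · intro j hj
      simp only [Finset.mem_filter, Finset.mem_univ, true_and] at hj ⊢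
      omega
    · intro j _ _
      exact div_nonneg (hB0 j) (hbd0 j)
  have hW_le : ∀ t, t ≤ k → W t ≤ prefBudget n m B t / p := by
    intro t ht
    simp only [hWdef]
    unfold prefBudget
    rw [Finset.sum_div]
    apply Finset.sum_le_sum
    intro j hj
    simp only [Finset.mem_filter, Finset.mem_univ, true_and] at hj
    exact div_le_div_of_nonneg_left (hB0 j) hp_pos (hbd_lo j (by omega))
  have hW_ge : ∀ t : ℕ, prefBudget n m B t / q ≤ W t := by
    intro t
    simp only [hWdef]
    unfold prefBudget
    rw [Finset.sum_div]
    apply Finset.sum_le_sum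
    intro j hj
    exact div_le_div_of_nonneg_left (hB0 j) (hbd_pos j) (hbd_hi j)
  have hDW : ∀ t, t < k → min D (W t) = W t := by
    intro t ht
    apply min_eq_right
    calc W t ≤ W (k-1) := hW_mono _ _ (by omega)
      _ ≤ prefBudget n m B (k-1) / p := hW_le _ (by omega)
      _ ≤ D := by rw [div_le_iff₀ hp_pos]; linarith [hSBk1]
  have hc0_nonneg : ∀ i, 0 ≤ gfpClicks n D bd B i :=
    fun i => gfpClicks_nonneg D hD.le bd B hB0 hbd0 i
  have hSBsucc : ∀ i : Fin n,
      prefBudget n m B (rankBy n m i + 1) = prefBudget n m B (rankBy n m i) + B i :=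
    fun i => prefBudget_succ_of_rank rfl
  -- equilibrium clicks of winners
  have hc0_win : ∀ i, rankBy n m i + 1 < k →
      B i / q ≤ gfpClicks n D bd B i ∧ gfpClicks n D bd B i ≤ B i / p := by
    intro i hi
    rw [hc0eq i, hDW _ (by omega)]
    constructor
    · apply le_min
      · exact div_le_div_of_nonneg_left (hB0 i) (hbd_pos i) (hbd_hi i)
      · have h1 : W (rankBy n m i) ≤ prefBudget n m B (rankBy n m i) / p :=
          hW_le _ (by omega)
        have h2 : prefBudget n m B (rankBy n m i) + B i ≤ p * D := by
          rw [← hSBsucc i]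
          calc prefBudget n m B (rankBy n m i + 1) ≤ prefBudget n m B (k-1) :=
                hSBmono _ _ (by omega)
            _ ≤ p * D := hSBk1
        have h3 : B i / q ≤ B i / p := div_le_div_of_nonneg_left (hB0 i) hp_pos hpq
        have h4 : B i / p ≤ D - prefBudget n m B (rankBy n m i) / p := by
          rw [le_sub_iff_add_le, ← add_div, div_le_iff₀ hp_pos]
          linarith
        linarith
    · exact (min_le_left _ _).trans
        (div_le_div_of_nonneg_left (hB0 i) hp_pos (hbd_lo i (by omega)))
  -- equilibrium clicks of the marginal bidder
  have hc0_marg : ∀ i, rankBy n m i + 1 = k →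
      min (B i / q) (D - prefBudget n m B (k-1) / p) ≤ gfpClicks n D bd B i ∧
      gfpClicks n D bd B i ≤ min (B i / p) (D - prefBudget n m B (k-1) / q) := by
    intro i hi
    have hri : rankBy n m i = k - 1 := by omega
    rw [hc0eq i, hri, hDW _ (by omega)]
    constructor
    · apply min_le_min
      · exact div_le_div_of_nonneg_left (hB0 i) (hbd_pos i) (hbd_hi i)
      · have := hW_le (k-1) (by omega)
        linarith
    · apply min_le_min
      · exact div_le_div_of_nonneg_left (hB0 i) hp_pos (hbd_lo i (by omega))
      · have := hW_ge (k-1)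
        linarith
  -- equilibrium clicks of losers
  have hc0_los : ∀ i, k ≤ rankBy n m i → gfpClicks n D bd B i ≤ D - p * D / q := by
    intro i hi
    rw [hc0eq i]
    refine (min_le_right _ _).trans ?_
    have h1 : p * D / q ≤ min D (W (rankBy n m i)) := by
      apply le_min
      · rw [div_le_iff₀ hq_pos]
        nlinarith [hpq, hD.le]
      · calc p * D / q ≤ prefBudget n m B k / q := (div_le_div_iff_of_pos_right hq_pos).2 hSBk
          _ ≤ W k := hW_ge k
          _ ≤ W (rankBy n m i) := hW_mono _ _ hi
    linarith
  -- psClicks evaluation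
  have hps : ∀ i, psClicks n D m B i =
      if rankBy n m i + 1 < k then B i / p
      else if rankBy n m i + 1 = k then (p * D - prefBudget n m B (k-1)) / p
      else 0 := by
    intro i
    unfold psClicks
    rw [← hpdef, ← hkdef, if_neg (not_le.2 hp_pos)]
  refine ⟨bd, hbd0, ?_, ?_⟩
  · -- ε-Nash property
    intro i b' B' hb' hB'
    have hqB0 : ∀ j, 0 ≤ Function.update B i B' j := by
      intro j
      rcases eq_or_ne j i with rfl | hji
      · rw [Function.update_self]; exact hB'.le
      · rw [Function.update_of_ne hji]; exact hB0 j
    have hq'0 : ∀ j, 0 ≤ Function.update bd i b' j := by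
      intro j
      rcases eq_or_ne j i with rfl | hji
      · rw [Function.update_self]; exact hb'
      · rw [Function.update_of_ne hji]; exact hbd0 j
    have hRHS : gfpUtil n D (m i) (B i) bd B i = ((gfpClicks n D bd B i : ℝ) : EReal) := by
      rw [gfpUtil, if_pos]
      right
      refine ⟨hbd_le_m i, ?_⟩
      have h1 : gfpClicks n D bd B i ≤ B i / bd i := gfpClicks_le_bud D bd B i
      calc gfpClicks n D bd B i * bd i ≤ (B i / bd i) * bd i :=
            mul_le_mul_of_nonneg_right h1 (hbd0 i)
        _ = B i := div_mul_cancel₀ _ (hbd_pos i).ne'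
    rw [hRHS, gfpUtil]
    split_ifs with hcase
    swap
    · exact bot_le
    rw [← EReal.coe_add, EReal.coe_le_coe_iff]
    rcases hcase with hc0' | ⟨hbm, hcb⟩
    · rw [hc0']
      linarith [hc0_nonneg i, hε]
    simp only [Function.update_self] at hbm hcb
    have hTbound : ∀ T : Finset (Fin n), (∀ j ∈ T, j ≠ i) →
        (∀ j ∈ T, ord (Function.update bd i b') j i) →
        gfpClicks n D (Function.update bd i b') (Function.update B i B') i
          ≤ D - min D (∑ j ∈ T, B j / bd j) := by
      intro T hTne hTord
      have h := gfpClicks_le_sub D hD.le _ _ hqB0 hq'0 i T hTord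
      have hsame : (∑ j ∈ T, Function.update B i B' j / Function.update bd i b' j)
          = ∑ j ∈ T, B j / bd j := by
        apply Finset.sum_congr rfl
        intro j hj
        rw [Function.update_of_ne (hTne j hj), Function.update_of_ne (hTne j hj)]
      rwa [hsame] at h
    rcases Nat.lt_trichotomy (rankBy n m i + 1) k with hcase1 | hcase1 | hcase1
    · -- winner, not marginal
      rcases le_or_gt p b' with hpb | hpb
      · have hb'pos : 0 < b' := lt_of_lt_of_le hp_pos hpb
        have h1 : gfpClicks n D (Function.update bd i b') (Function.update B i B') i
            ≤ B i / b' := (le_div_iff₀ hb'pos).2 hcb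
        have h2 : B i / b' ≤ B i / p := div_le_div_of_nonneg_left (hB0 i) hp_pos hpb
        have h3 := (hc0_win i hcase1).1
        have h4 := hkey1 (B i) (hB0 i) (hB_le_Tb i)
        linarith
      · have hmemi : i ∈ Finset.univ.filter (fun j => rankBy n m j < k) := by
          simp only [Finset.mem_filter, Finset.mem_univ, true_and]; omega
        have hTne : ∀ j ∈ (Finset.univ.filter (fun j => rankBy n m j < k)).erase i, j ≠ i :=
          fun j hj => Finset.ne_of_mem_erase hj
        have hTord : ∀ j ∈ (Finset.univ.filter (fun j => rankBy n m j < k)).erase i,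
            ord (Function.update bd i b') j i := by
          intro j hj
          have hjk : rankBy n m j < k := by
            have h5 := Finset.mem_of_mem_erase hj
            simp only [Finset.mem_filter, Finset.mem_univ, true_and] at h5
            exact h5
          refine Or.inl ?_
          rw [Function.update_self, Function.update_of_ne (hTne j hj)]
          exact lt_of_lt_of_le hpb (hbd_lo j hjk)
        have hc' := hTbound _ hTne hTord
        have hsumB : ∑ j ∈ (Finset.univ.filter (fun j => rankBy n m j < k)).erase i, B j
            = prefBudget n m B k - B i := by
          rw [Finset.sum_erase_eq_sub hmemi]
          rfl
        have hsum : (prefBudget n m B k - B i) / q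
            ≤ ∑ j ∈ (Finset.univ.filter (fun j => rankBy n m j < k)).erase i, B j / bd j := by
          rw [← hsumB, Finset.sum_div]
          apply Finset.sum_le_sum
          intro j hj
          exact div_le_div_of_nonneg_left (hB0 j) (hbd_pos j) (hbd_hi j)
        rcases le_or_gt D ((prefBudget n m B k - B i) / q) with hDle | hDgt
        · rw [min_eq_left (le_trans hDle hsum)] at hc'
          linarith [hc0_nonneg i, hε]
        · have h5 := le_min hDgt.le hsum
          have h7 : p * D / q ≤ prefBudget n m B k / q := (div_le_div_iff_of_pos_right hq_pos).2 hSBk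
          have h8 : (prefBudget n m B k - B i) / q = prefBudget n m B k / q - B i / q :=
            sub_div _ _ _
          have h3 := (hc0_win i hcase1).1
          have h6 := hkey2
          linarith
    · -- marginal bidder
      have hri : rankBy n m i = k - 1 := by omega
      have hSBki : prefBudget n m B k = prefBudget n m B (k-1) + B i := by
        have h5 := hSBsucc i
        rw [hri, show k - 1 + 1 = k from by omega] at h5
        exact h5
      have hVBp : D - prefBudget n m B (k-1) / p ≤ B i / p := by
        rw [sub_le_iff_le_add, ← add_div, le_div_iff₀ hp_pos]
        nlinarith [hSBk, hSBki]
      have hc0lo := (hc0_marg i hcase1).1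
      have hBiq := hkey1 (B i) (hB0 i) (hB_le_Tb i)
      have hc0V : D - prefBudget n m B (k-1) / p - ε/2 ≤ gfpClicks n D bd B i := by
        refine le_trans (le_min ?_ ?_) hc0lo
        · linarith
        · linarith
      rcases le_or_gt b' p with hpb | hpb
      · have hTne : ∀ j ∈ Finset.univ.filter (fun j => rankBy n m j < k - 1), j ≠ i := by
          intro j hj
          simp only [Finset.mem_filter, Finset.mem_univ, true_and] at hj
          intro hji
          rw [hji, hri] at hj
          omega
        have hTord : ∀ j ∈ Finset.univ.filter (fun j => rankBy n m j < k - 1),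
            ord (Function.update bd i b') j i := by
          intro j hj
          have hjk : rankBy n m j < k - 1 := by
            simpa using hj
          have hbdj : p ≤ bd j := hbd_lo j (by omega)
          rcases lt_or_eq_of_le (le_trans hpb hbdj) with hlt | heq
          · refine Or.inl ?_
            rw [Function.update_self, Function.update_of_ne (hTne j hj)]
            exact hlt
          · have h1 : bd j = p := le_antisymm (heq ▸ hpb) hbdj
            have hb'p : b' = p := by rw [heq, h1]
            have hmj : m j = p := hbd_eq_p j h1
            have hmi_ge : p ≤ m i := hb'p ▸ hbm
            have hmi_le : m i ≤ m j := key_antitone (by omega)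
            have hmieq : m i = p := le_antisymm (le_trans hmi_le hmj.le) hmi_ge
            have hordm : ord m j i := ord_iff_rank_lt.2 (by omega)
            rcases hordm with hlt2 | ⟨_, hji⟩
            · rw [hmieq, hmj] at hlt2
              exact absurd hlt2 (lt_irrefl p)
            · refine Or.inr ⟨?_, hji⟩
              rw [Function.update_self, Function.update_of_ne (hTne j hj), h1, hb'p]
        have hc' := hTbound _ hTne hTord
        have hsum : prefBudget n m B (k-1) / q
            ≤ ∑ j ∈ Finset.univ.filter (fun j => rankBy n m j < k - 1), B j / bd j := by
          unfold prefBudget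
          rw [Finset.sum_div]
          apply Finset.sum_le_sum
          intro j hj
          exact div_le_div_of_nonneg_left (hB0 j) (hbd_pos j) (hbd_hi j)
        have hqD : prefBudget n m B (k-1) / q ≤ D := by
          rw [div_le_iff₀ hq_pos]
          nlinarith [hSBk1, hpq, hD.le]
        have hmin := le_min hqD hsum
        have hk1eps := hkey1 (prefBudget n m B (k-1)) (hSB_nonneg _) (hSB_le_Tb _)
        linarith
      · have hb'pos : 0 < b' := lt_trans hp_pos hpb
        have hmiP : p < m i := lt_of_lt_of_le hpb hbm
        have hii : i₀ = i := rank_injective m (by rw [hi₀, hri])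
        have hpSB : p * D = prefBudget n m B k := by
          rcases le_total (prefBudget n m B k / D) (m i₀) with hc | hc
          · rw [hpeq, min_eq_left hc, div_mul_cancel₀ _ hD.ne']
          · exfalso
            have h5 : p = m i₀ := by rw [hpeq, min_eq_right hc]
            rw [hii] at h5
            rw [h5] at hmiP
            exact lt_irrefl _ hmiP
        have h9 : prefBudget n m B (k-1) = p * D - B i := by
          rw [hpSB, hSBki]; ring
        have hVeq : D - prefBudget n m B (k-1) / p = B i / p := by
          rw [h9]
          field_simp
          ring
        have h1 : gfpClicks n D (Function.update bd i b') (Function.update B i B') i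
            ≤ B i / b' := (le_div_iff₀ hb'pos).2 hcb
        have h2 : B i / b' ≤ B i / p := div_le_div_of_nonneg_left (hB0 i) hp_pos hpb.le
        linarith [hc0V, hVeq, hε]
    · -- loser
      have hki : k ≤ rankBy n m i := by omega
      have hbP : b' ≤ p := le_trans hbm (hmp i hki)
      have hTne : ∀ j ∈ Finset.univ.filter (fun j => rankBy n m j < k), j ≠ i := by
        intro j hj
        simp only [Finset.mem_filter, Finset.mem_univ, true_and] at hj
        intro hji
        rw [hji] at hj
        omega
      have hTord : ∀ j ∈ Finset.univ.filter (fun j => rankBy n m j < k),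
          ord (Function.update bd i b') j i := by
        intro j hj
        have hjk : rankBy n m j < k := by simpa using hj
        have hbdj : p ≤ bd j := hbd_lo j hjk
        rcases lt_or_eq_of_le (le_trans hbP hbdj) with hlt | heq
        · refine Or.inl ?_
          rw [Function.update_self, Function.update_of_ne (hTne j hj)]
          exact hlt
        · have h1 : bd j = p := le_antisymm (heq ▸ hbP) hbdj
          have hb'p : b' = p := by rw [heq, h1]
          have hmj : m j = p := hbd_eq_p j h1
          have hmi_ge : p ≤ m i := hb'p ▸ hbm
          have hmi_le : m i ≤ m j := key_antitone (by omega)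
          have hmieq : m i = p := le_antisymm (le_trans hmi_le hmj.le) hmi_ge
          have hordm : ord m j i := ord_iff_rank_lt.2 (by omega)
          rcases hordm with hlt2 | ⟨_, hji⟩
          · rw [hmieq, hmj] at hlt2
            exact absurd hlt2 (lt_irrefl p)
          · refine Or.inr ⟨?_, hji⟩
            rw [Function.update_self, Function.update_of_ne (hTne j hj), h1, hb'p]
      have hc' := hTbound _ hTne hTord
      have hsum : prefBudget n m B k / q
          ≤ ∑ j ∈ Finset.univ.filter (fun j => rankBy n m j < k), B j / bd j := by
        unfold prefBudget
        rw [Finset.sum_div]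
        apply Finset.sum_le_sum
        intro j hj
        exact div_le_div_of_nonneg_left (hB0 j) (hbd_pos j) (hbd_hi j)
      have h7 : p * D / q ≤ prefBudget n m B k / q := (div_le_div_iff_of_pos_right hq_pos).2 hSBk
      rcases le_or_gt (prefBudget n m B k / q) D with hDge | hDlt
      · have hmin := le_min hDge hsum
        linarith [hkey2, hc0_nonneg i, hε]
      · rw [min_eq_left (le_trans hDlt.le hsum)] at hc'
        linarith [hc0_nonneg i, hε]
  · -- closeness to PS clicks
    intro i
    rw [hps i]
    rcases Nat.lt_trichotomy (rankBy n m i + 1) k with h1 | h1 | h1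
    · rw [if_pos h1]
      obtain ⟨hlo, hhi⟩ := hc0_win i h1
      have h4 := hkey1 (B i) (hB0 i) (hB_le_Tb i)
      rw [abs_le]
      constructor <;> linarith
    · rw [if_neg (by omega), if_pos h1]
      obtain ⟨hlo, hhi⟩ := hc0_marg i h1
      have hri : rankBy n m i = k - 1 := by omega
      have hSBki : prefBudget n m B k = prefBudget n m B (k-1) + B i := by
        have h5 := hSBsucc i
        rw [hri, show k - 1 + 1 = k from by omega] at h5
        exact h5
      have hVps : (p * D - prefBudget n m B (k-1)) / p = D - prefBudget n m B (k-1) / p := by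
        rw [sub_div, mul_comm, mul_div_assoc, div_self hp_pos.ne', mul_one]
      rw [hVps]
      have hVBp : D - prefBudget n m B (k-1) / p ≤ B i / p := by
        rw [sub_le_iff_le_add, ← add_div, le_div_iff₀ hp_pos]
        nlinarith [hSBk, hSBki]
      have hk1eps := hkey1 (prefBudget n m B (k-1)) (hSB_nonneg _) (hSB_le_Tb _)
      have hBiq := hkey1 (B i) (hB0 i) (hB_le_Tb i)
      rw [abs_le]
      constructor
      · have hminlo : D - prefBudget n m B (k-1) / p - ε/2
            ≤ min (B i / q) (D - prefBudget n m B (k-1) / p) :=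
          le_min (by linarith) (by linarith)
        linarith
      · have h5 := min_le_right (B i / p) (D - prefBudget n m B (k-1) / q)
        linarith
    · rw [if_neg (by omega), if_neg (by omega)]
      have h2 := hc0_los i (by omega)
      have h3 := hc0_nonneg i
      rw [sub_zero, abs_le]
      constructor <;> linarith [hkey2]
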